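/- Let X be a finite partially ordered set whose comparability graph G is connected, let T be a spanning tree of G, let R be a ring, and let φ be a multiplicative automorphism of I(X,R) associated with a coherent system c. Then φ is inner if and only if for every pair x < y that is not a tree edge and every path p in T from x to y, the weight of p equals c x y (equivalently, every fundamental cycle of G with respect to T has weight 1). -/

import Mathlib

/-- A ring automorphism of the incidence algebra is *multiplicative* if it fixes every
function supported on the diagonal and maps functions vanishing on the diagonal to
functions vanishing on the diagonal. -/
def IsMultAut {X R : Type*} [Preorder X] [LocallyFiniteOrder X] [DecidableEq X] [Ring R]
    (φ : RingAut (IncidenceAlgebra R X)) : Prop :=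
  (∀ f : IncidenceAlgebra R X, (∀ x y : X, x ≠ y → f x y = 0) → φ f = f) ∧
  (∀ f : IncidenceAlgebra R X, (∀ x : X, f x x = 0) → ∀ x : X, (φ f) x x = 0)

/-- The comparability graph of a partially ordered set: `x` and `y` are adjacent iff
they are distinct and comparable. -/
def compGraph (X : Type*) [PartialOrder X] : SimpleGraph X where
  Adj x y := x < y ∨ y < x
  symm := ⟨fun _ _ h => h.symm⟩
  loopless := ⟨fun x h => h.elim (lt_irrefl x) (lt_irrefl x)⟩

open scoped Classical in
/-- The weight of a walk with respect to a system `c`: the product over the darts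
`(s, t)` of the walk, in order, of `c s t` if `s < t` and of `(c t s)⁻¹` if `t < s`. -/
noncomputable def walkWeight {X R : Type*} [PartialOrder X] [Ring R]
    (c : X → X → R) {H : SimpleGraph X} {x y : X} (p : H.Walk x y) : R :=
  (p.darts.map fun d => if d.toProd.1 < d.toProd.2 then c d.toProd.1 d.toProd.2
    else Ring.inverse (c d.toProd.2 d.toProd.1)).prod

set_option linter.unusedSectionVars false
namespace InnerAux

open Finset SimpleGraph

section Ring
variable {R : Type*} [Ring R]

/-- central unit predicate -/
def CU (r : R) : Prop := r ∈ Set.center R ∧ IsUnit r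

lemma CU.comm {r : R} (h : CU r) (b : R) : b * r = r * b :=
  Semigroup.mem_center_iff.1 h.1 b

lemma CU.one : CU (1 : R) := ⟨Set.one_mem_center, isUnit_one⟩

lemma CU.mul {r s : R} (hr : CU r) (hs : CU s) : CU (r * s) :=
  ⟨Set.mul_mem_center hr.1 hs.1, hr.2.mul hs.2⟩

lemma CU.inverse {r : R} (h : CU r) : CU (Ring.inverse r) := by
  obtain ⟨hc, u, rfl⟩ := h
  rw [Ring.inverse_unit]
  refine ⟨Semigroup.mem_center_iff.2 fun b => ?_, u⁻¹.isUnit⟩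
  have hb : Commute b ↑u := Semigroup.mem_center_iff.1 hc b
  exact hb.units_inv_right.eq

end Ring

section IA
variable {X R : Type*} [PartialOrder X] [LocallyFiniteOrder X] [DecidableEq X] [Ring R]

/-- diagonal element of the incidence algebra -/
def diag (σ : X → R) : IncidenceAlgebra R X :=
  ⟨fun a b => if a = b then σ a else 0, fun a b h => if_neg fun he => h (le_of_eq he)⟩

@[simp] lemma diag_apply (σ : X → R) (a b : X) : diag σ a b = if a = b then σ a else 0 := rfl

lemma diag_mul_apply (σ : X → R) (f : IncidenceAlgebra R X) (a b : X) (hab : a ≤ b) :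
    (diag σ * f) a b = σ a * f a b := by
  rw [IncidenceAlgebra.mul_apply,
    Finset.sum_eq_single_of_mem a (Finset.mem_Icc.2 ⟨le_rfl, hab⟩)]
  · simp
  · intro x _ hxa
    rw [diag_apply, if_neg (Ne.symm hxa), zero_mul]

lemma mul_diag_apply (σ : X → R) (f : IncidenceAlgebra R X) (a b : X) (hab : a ≤ b) :
    (f * diag σ) a b = f a b * σ b := by
  rw [IncidenceAlgebra.mul_apply,
    Finset.sum_eq_single_of_mem b (Finset.mem_Icc.2 ⟨hab, le_rfl⟩)]
  · simp
  · intro x _ hxb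
    rw [diag_apply, if_neg hxb, mul_zero]

/-- the element supported at a single pair `(a, b)` with value `1` -/
def single (a b : X) (hab : a ≤ b) : IncidenceAlgebra R X where
  toFun x y := if x = a ∧ y = b then 1 else 0
  eq_zero_of_not_le' x y h := if_neg (by rintro ⟨rfl, rfl⟩; exact h hab)

@[simp] lemma single_apply (a b : X) (hab : a ≤ b) (x y : X) :
    single a b hab x y = if x = a ∧ y = b then (1 : R) else 0 := rfl

lemma mul_single_mul_apply (p q : IncidenceAlgebra R X) (a b : X) (hab : a ≤ b) :
    (p * single (R := R) a b hab * q) a b = p a a * q b b := by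
  have h1 : ∀ z ∈ Icc a b, z ≠ b → (p * single (R := R) a b hab) a z * q z b = 0 := by
    intro z _ hzb
    have h0 : (p * single (R := R) a b hab) a z = 0 := by
      rw [IncidenceAlgebra.mul_apply]
      exact Finset.sum_eq_zero fun w _ => by simp [hzb]
    rw [h0, zero_mul]
  rw [IncidenceAlgebra.mul_apply,
    Finset.sum_eq_single_of_mem b (Finset.mem_Icc.2 ⟨hab, le_rfl⟩) h1,
    IncidenceAlgebra.mul_apply,
    Finset.sum_eq_single_of_mem a (Finset.mem_Icc.2 ⟨le_rfl, hab⟩)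
      (fun w _ hwa => by simp [hwa])]
  simp

end IA

section Walks
open scoped Classical
variable {X R : Type*} [PartialOrder X] [Ring R] {H : SimpleGraph X}

lemma walkWeight_nil {c : X → X → R} {x : X} :
    walkWeight c (SimpleGraph.Walk.nil : H.Walk x x) = 1 := rfl

lemma walkWeight_cons {c : X → X → R} {x y z : X} (h : H.Adj x y) (p : H.Walk y z) :
    walkWeight c (SimpleGraph.Walk.cons h p)
      = (if x < y then c x y else Ring.inverse (c y x)) * walkWeight c p := by
  simp [walkWeight]

lemma walkWeight_append {c : X → X → R} {x y z : X} (p : H.Walk x y) (q : H.Walk y z) :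
    walkWeight c (p.append q) = walkWeight c p * walkWeight c q := by
  simp [walkWeight, SimpleGraph.Walk.darts_append]

end Walks

end InnerAux

open InnerAux Finset SimpleGraph in
/-- Given a spanning tree `T` of the connected comparability graph, a
multiplicative automorphism associated with a coherent system `c` is inner iff for every
non-tree edge `x < y`, each path in `T` from `x` to `y` has weight `c x y`
(Corollary 3.10). -/
theorem inner_iff_tree_path_weights {X R : Type*} [PartialOrder X] [Fintype X]
    [LocallyFiniteOrder X] [DecidableEq X] [Ring R]
    (hG : (compGraph X).Connected)
    (T : SimpleGraph X) (hT : T ≤ compGraph X) (hTconn : T.Connected)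
    (hTacyc : T.IsAcyclic)
    (φ : RingAut (IncidenceAlgebra R X)) (hφ : IsMultAut φ)
    (c : X → X → R)
    (hc : ∀ x y : X, x < y → c x y ∈ Set.center R ∧ IsUnit (c x y))
    (hcoh : ∀ x z y : X, x < z → z < y → c x y = c x z * c z y)
    (hassoc : ∀ f : IncidenceAlgebra R X,
      (∀ x y : X, x < y → (φ f) x y = c x y * f x y) ∧ (∀ x : X, (φ f) x x = f x x)) :
    (∃ u : (IncidenceAlgebra R X)ˣ, ∀ f : IncidenceAlgebra R X, φ f = ↑u⁻¹ * f * ↑u) ↔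
    (∀ x y : X, x < y → ¬T.Adj x y →
      ∀ p : T.Walk x y, p.IsPath → walkWeight c p = c x y) := by
  classical
  obtain ⟨r⟩ := hTconn.nonempty
  constructor
  · rintro ⟨u, hu⟩ x y hxy _ p _
    set A : IncidenceAlgebra R X := ↑u with hA
    set B : IncidenceAlgebra R X := ↑u⁻¹ with hB
    have hdiag1 : ∀ a : X, A a a * B a a = 1 := by
      intro a
      have h1 : (A * B) a a = (1 : IncidenceAlgebra R X) a a := by
        rw [hA, hB, Units.mul_inv]
      simpa [IncidenceAlgebra.mul_apply, Finset.Icc_self] using h1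
    have hdiag2 : ∀ a : X, B a a * A a a = 1 := by
      intro a
      have h1 : (B * A) a a = (1 : IncidenceAlgebra R X) a a := by
        rw [hA, hB, Units.inv_mul]
      simpa [IncidenceAlgebra.mul_apply, Finset.Icc_self] using h1
    have hcab : ∀ a b : X, a < b → c a b = B a a * A b b := by
      intro a b hab
      have h1 := (hassoc (single (R := R) a b hab.le)).1 a b hab
      rw [hu, mul_single_mul_apply] at h1
      simpa using h1.symm
    have htel : ∀ (a b : X) (q : T.Walk a b), walkWeight c q = B a a * A b b := by
      intro a b q
      induction q with
      | nil => rw [walkWeight_nil]; exact (hdiag2 _).symm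
      | @cons s t w h q ih =>
        rw [walkWeight_cons, ih]
        rcases (hT h : s < t ∨ t < s) with hlt | hlt
        · rw [if_pos hlt, hcab _ _ hlt, mul_assoc, ← mul_assoc (A t t), hdiag1 t, one_mul]
        · rw [if_neg (lt_asymm hlt)]
          have h1 : c t s * (B s s * A t t) = 1 := by
            rw [hcab t s hlt, mul_assoc, ← mul_assoc (A s s), hdiag1 s, one_mul, hdiag2 t]
          have h2 : (B s s * A t t) * c t s = 1 := by
            rw [hcab t s hlt, mul_assoc, ← mul_assoc (A t t), hdiag1 t, one_mul, hdiag2 s]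
          have hinv : Ring.inverse (c t s) = B s s * A t t :=
            Ring.inverse_unit ⟨c t s, B s s * A t t, h1, h2⟩
          rw [hinv, mul_assoc, ← mul_assoc (A t t), hdiag1 t, one_mul]
    rw [htel x y p, ← hcab x y hxy]
  · intro H
    -- the canonical path from a to b in the tree
    have reach : ∀ a b : X, T.Reachable a b := hTconn.preconnected
    let pth : ∀ a b : X, T.Path a b := fun a b => (Classical.choice (reach a b)).toPath
    let σ : X → R := fun b => walkWeight c (pth r b).1
    have σ_def : ∀ b : X, σ b = walkWeight c (pth r b).1 := fun _ => rfl
    have σ_path : ∀ (b : X) (q : T.Walk r b), q.IsPath → walkWeight c q = σ b := by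
      intro b q hq
      have h : (⟨q, hq⟩ : T.Path r b) = pth r b := hTacyc.path_unique _ _
      rw [σ_def]
      exact congrArg (fun p : T.Path r b => walkWeight c p.1) h
    have CUc : ∀ {a b : X}, a < b → CU (c a b) := fun h => ⟨(hc _ _ h).1, (hc _ _ h).2⟩
    have CUedge : ∀ {a b : X}, T.Adj a b →
        CU (if a < b then c a b else Ring.inverse (c b a)) := by
      intro a b h
      rcases (hT h : a < b ∨ b < a) with hlt | hlt
      · rw [if_pos hlt]; exact CUc hlt
      · rw [if_neg (lt_asymm hlt)]; exact (CUc hlt).inverse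
    have CUw : ∀ {a b : X} (q : T.Walk a b), CU (walkWeight c q) := by
      intro a b q
      induction q with
      | nil => rw [walkWeight_nil]; exact CU.one
      | cons h q ih => rw [walkWeight_cons]; exact (CUedge h).mul ih
    have CUσ : ∀ b, CU (σ b) := fun b => CUw _
    have wcancel : ∀ {a b : X}, T.Adj a b →
        (if a < b then c a b else Ring.inverse (c b a)) *
        (if b < a then c b a else Ring.inverse (c a b)) = 1 := by
      intro a b h
      rcases (hT h : a < b ∨ b < a) with hlt | hlt
      · rw [if_pos hlt, if_neg (lt_asymm hlt), Ring.mul_inverse_cancel _ (hc a b hlt).2]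
      · rw [if_neg (lt_asymm hlt), if_pos hlt, Ring.inverse_mul_cancel _ (hc b a hlt).2]
    have step : ∀ {s t : X} (h : T.Adj s t),
        σ t = σ s * (if s < t then c s t else Ring.inverse (c t s)) := by
      intro s t h
      by_cases ht : t ∈ (pth r s).1.support
      · have hp : (pth r s).1.IsPath := (pth r s).2
        have h1 : ((pth r s).1.takeUntil t ht).IsPath := hp.takeUntil ht
        have h2 : ((pth r s).1.dropUntil t ht).IsPath := hp.dropUntil ht
        have hedge : (Walk.cons h.symm Walk.nil : T.Walk t s).IsPath := by simp [h.ne']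
        have hdrop : (pth r s).1.dropUntil t ht = Walk.cons h.symm Walk.nil := by
          have huniq : (⟨(pth r s).1.dropUntil t ht, h2⟩ : T.Path t s)
              = ⟨Walk.cons h.symm Walk.nil, hedge⟩ := hTacyc.path_unique _ _
          exact congrArg Subtype.val huniq
        have hσs : σ s = σ t * (if t < s then c t s else Ring.inverse (c s t)) := by
          calc σ s = walkWeight c (pth r s).1 := σ_def s
            _ = walkWeight c (((pth r s).1.takeUntil t ht).append ((pth r s).1.dropUntil t ht)) :=
                by rw [Walk.take_spec]
            _ = walkWeight c ((pth r s).1.takeUntil t ht)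
                  * walkWeight c ((pth r s).1.dropUntil t ht) := walkWeight_append _ _
            _ = σ t * walkWeight c (Walk.cons h.symm Walk.nil) := by
                rw [σ_path t _ h1, hdrop]
            _ = σ t * (if t < s then c t s else Ring.inverse (c s t)) := by
                rw [walkWeight_cons, walkWeight_nil, mul_one]
        rw [hσs, mul_assoc, wcancel h.symm, mul_one]
      · have hcons : ((pth r s).1.concat h).IsPath := by
          rw [← Walk.isPath_reverse_iff, Walk.reverse_concat]
          refine (Walk.cons_isPath_iff _ _).2 ⟨(Walk.isPath_reverse_iff _).2 (pth r s).2, ?_⟩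
          rw [Walk.support_reverse]
          simpa using ht
        calc σ t = walkWeight c ((pth r s).1.concat h) := (σ_path t _ hcons).symm
          _ = walkWeight c ((pth r s).1.append (Walk.cons h Walk.nil)) := by
              rw [Walk.concat_eq_append]
          _ = walkWeight c (pth r s).1 * walkWeight c (Walk.cons h Walk.nil) :=
              walkWeight_append _ _
          _ = σ s * (if s < t then c s t else Ring.inverse (c t s)) := by
              rw [← σ_def, walkWeight_cons, walkWeight_nil, mul_one]
    have hwalk : ∀ {a b : X} (q : T.Walk a b), σ b = σ a * walkWeight c q := by
      intro a b q
      induction q with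
      | nil => rw [walkWeight_nil, mul_one]
      | cons h q ih => rw [walkWeight_cons, ← mul_assoc, ← step h, ih]
    have hσc : ∀ x y : X, x < y → σ y = σ x * c x y := by
      intro x y hxy
      by_cases hAdj : T.Adj x y
      · have := step hAdj
        rwa [if_pos hxy] at this
      · have hW := H x y hxy hAdj (pth x y).1 (pth x y).2
        rw [hwalk (pth x y).1, hW]
    -- construct the diagonal unit
    set dv : IncidenceAlgebra R X := diag σ with hdv
    set di : IncidenceAlgebra R X := diag fun x => Ring.inverse (σ x) with hdi
    have hvi : dv * di = 1 := by
      ext a b hab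
      rw [hdv, hdi, mul_diag_apply _ _ _ _ hab, diag_apply, IncidenceAlgebra.one_apply]
      by_cases h : a = b
      · subst h
        rw [if_pos rfl, if_pos rfl, Ring.mul_inverse_cancel _ (CUσ a).2]
      · rw [if_neg h, if_neg h, zero_mul]
    have hiv : di * dv = 1 := by
      ext a b hab
      rw [hdv, hdi, diag_mul_apply _ _ _ _ hab, diag_apply, IncidenceAlgebra.one_apply]
      by_cases h : a = b
      · subst h
        rw [if_pos rfl, if_pos rfl, Ring.inverse_mul_cancel _ (CUσ a).2]
      · rw [if_neg h, if_neg h, mul_zero]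
    refine ⟨⟨dv, di, hvi, hiv⟩, fun f => ?_⟩
    show φ f = di * f * dv
    ext a b hab
    rw [mul_diag_apply _ _ _ _ hab, diag_mul_apply _ _ _ _ hab]
    rcases eq_or_lt_of_le hab with h | h
    · subst h
      rw [(hassoc f).2 a, ← CU.comm (CUσ a).inverse (f a a), mul_assoc,
        Ring.inverse_mul_cancel _ (CUσ a).2, mul_one]
    · rw [(hassoc f).1 a b h, hσc a b h, ← CU.comm (CUσ a).inverse (f a b),
        ← mul_assoc, mul_assoc (f a b), Ring.inverse_mul_cancel _ (CUσ a).2, mul_one,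
        CU.comm (CUc h) (f a b)]
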